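/- Let γ > 1 and Q(v) = v^{1-γ}/(γ-1) for v > 0, so Q'(v) = -v^{-γ}. Fix v* > 0. There exists C > 0 such that for every w ∈ (0, 2v*): (a) Q(v|w) ≥ C⁻¹|v-w|² for all 0 < v ≤ 3v*, and (b) Q(v|w) ≥ C⁻¹|v-w| for all v ≥ 3v*, where Q(v|w) := Q(v) - Q(w) - Q'(w)(v-w). -/

import Mathlib

open Real Set


/-- Tangent line inequality for a convex function. -/
lemma tangent_line_le {S : Set ℝ} {f : ℝ → ℝ} {w v d : ℝ} (hf : ConvexOn ℝ S f)
    (hw : w ∈ S) (hv : v ∈ S) (hd : HasDerivAt f d w) :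
    f w + d * (v - w) ≤ f v := by
  rcases lt_trichotomy w v with h | h | h
  · have h1 := hf.le_slope_of_hasDerivAt hw hv h hd
    rw [slope_def_field] at h1
    have h2 : 0 < v - w := by linarith
    rw [le_div_iff₀ h2] at h1; nlinarith [h1]
  · simp [h]
  · have h1 := hf.slope_le_of_hasDerivAt hv hw h hd
    rw [slope_def_field] at h1
    have h2 : 0 < w - v := by linarith
    rw [div_le_iff₀ h2] at h1; nlinarith [h1]

lemma hasDerivAt_Qfun {γ x : ℝ} (hγ : 1 < γ) (hx : 0 < x) :
    HasDerivAt (fun t : ℝ => t ^ (1 - γ) / (γ - 1)) (-(x ^ (-γ))) x := by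
  have hne : γ - 1 ≠ 0 := by linarith
  have h := (Real.hasDerivAt_rpow_const (x := x) (p := 1 - γ) (Or.inl hx.ne')).div_const (γ - 1)
  have he : 1 - γ - 1 = -γ := by ring
  rw [he] at h
  refine h.congr_deriv ?_
  field_simp
  ring

lemma hasDerivAt_negrpow {γ x : ℝ} (hx : 0 < x) :
    HasDerivAt (fun t : ℝ => -(t ^ (-γ))) (γ * x ^ (-γ - 1)) x := by
  have h := (Real.hasDerivAt_rpow_const (x := x) (p := -γ) (Or.inl hx.ne')).neg
  refine h.congr_deriv ?_
  ring

lemma convexOn_QA {γ b : ℝ} (hγ : 1 < γ) (hb : 0 < b) :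
    ConvexOn ℝ (Ioc 0 b)
      (fun x : ℝ => x ^ (1 - γ) / (γ - 1) - γ * b ^ (-γ - 1) / 2 * x ^ 2) := by
  set m : ℝ := γ * b ^ (-γ - 1) with hm
  have hint : interior (Ioc (0:ℝ) b) = Ioo 0 b := interior_Ioc
  have hsq : ∀ x : ℝ, HasDerivAt (fun t : ℝ => m / 2 * t ^ 2) (m * x) x := by
    intro x
    have h := (hasDerivAt_pow 2 x).const_mul (m / 2)
    refine h.congr_deriv ?_
    push_cast; ring
  refine convexOn_of_hasDerivWithinAt2_nonneg (f' := fun x => -(x ^ (-γ)) - m * x)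
    (f'' := fun x => γ * x ^ (-γ - 1) - m) (convex_Ioc 0 b) ?_ ?_ ?_ ?_
  · intro x hx
    exact (((hasDerivAt_Qfun hγ hx.1).sub (hsq x)).continuousAt).continuousWithinAt
  · intro x hx
    rw [hint] at hx
    exact ((hasDerivAt_Qfun hγ hx.1).sub (hsq x)).hasDerivWithinAt
  · intro x hx
    rw [hint] at hx
    have h := (hasDerivAt_negrpow (γ := γ) hx.1).sub ((hasDerivAt_id x).const_mul m)
    have h2 : γ * x ^ (-γ - 1) - m * 1 = γ * x ^ (-γ - 1) - m := by ring
    rw [h2] at h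
    exact h.hasDerivWithinAt
  · intro x hx
    rw [hint] at hx
    have h1 : b ^ (-γ - 1) ≤ x ^ (-γ - 1) :=
      Real.rpow_le_rpow_of_nonpos hx.1 hx.2.le (by linarith)
    have hγ0 : (0:ℝ) < γ := by linarith
    have := mul_le_mul_of_nonneg_left h1 hγ0.le
    simp only [hm]
    linarith

lemma convexOn_QB {γ : ℝ} (hγ : 1 < γ) :
    ConvexOn ℝ (Ioi 0) (fun x : ℝ => x ^ (1 - γ) / (γ - 1)) := by
  have hint : interior (Ioi (0:ℝ)) = Ioi 0 := interior_Ioi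
  refine convexOn_of_hasDerivWithinAt2_nonneg (f' := fun x => -(x ^ (-γ)))
    (f'' := fun x => γ * x ^ (-γ - 1)) (convex_Ioi 0) ?_ ?_ ?_ ?_
  · intro x hx
    exact ((hasDerivAt_Qfun hγ hx).continuousAt).continuousWithinAt
  · intro x hx
    rw [hint] at hx
    exact (hasDerivAt_Qfun hγ hx).hasDerivWithinAt
  · intro x hx
    rw [hint] at hx
    exact (hasDerivAt_negrpow hx).hasDerivWithinAt
  · intro x hx
    rw [hint] at hx
    have h : (0:ℝ) < x ^ (-γ - 1) := Real.rpow_pos_of_pos hx _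
    exact le_of_lt (mul_pos (by linarith) h)

/-- Quadratic/linear lower bounds for the relative internal energy
`Q(v|w) = Q(v) - Q(w) + w^(-γ)(v - w)` with `Q(v) = v^(1-γ)/(γ-1)`. -/
theorem relative_Q_lower_bounds (γ : ℝ) (hγ : 1 < γ) (vs : ℝ) (hvs : 0 < vs) :
    ∃ C > 0, ∀ w : ℝ, 0 < w → w < 2 * vs →
      (∀ v : ℝ, 0 < v → v ≤ 3 * vs →
        C⁻¹ * |v - w| ^ 2 ≤
          v ^ (1 - γ) / (γ - 1) - w ^ (1 - γ) / (γ - 1) + w ^ (-γ) * (v - w)) ∧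
      (∀ v : ℝ, 3 * vs ≤ v →
        C⁻¹ * |v - w| ≤
          v ^ (1 - γ) / (γ - 1) - w ^ (1 - γ) / (γ - 1) + w ^ (-γ) * (v - w)) := by
  set m : ℝ := γ * (3 * vs) ^ (-γ - 1) with hm
  set c₂ : ℝ := (2 * vs) ^ (-γ) - (3 * vs) ^ (-γ) with hc₂
  have hγ0 : (0:ℝ) < γ := by linarith
  have h3vs : (0:ℝ) < 3 * vs := by linarith
  have hmpos : 0 < m := mul_pos hγ0 (Real.rpow_pos_of_pos h3vs _)
  have hc2pos : 0 < c₂ := by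
    have := Real.rpow_lt_rpow_of_neg (by linarith : (0:ℝ) < 2 * vs)
      (by linarith : 2 * vs < 3 * vs) (by linarith : -γ < 0)
    simp only [hc₂]; linarith
  set ε : ℝ := min (m / 2) (min c₂ (m * vs / 6)) with hε
  have hεpos : 0 < ε := by
    apply lt_min (by linarith)
    exact lt_min hc2pos (by positivity)
  refine ⟨ε⁻¹, inv_pos.mpr hεpos, ?_⟩
  intro w hw hw2
  have hwmem : w ∈ Ioc (0:ℝ) (3 * vs) := ⟨hw, by linarith⟩
  -- the strong convexity estimate on (0, 3vs]
  have keyA : ∀ v : ℝ, 0 < v → v ≤ 3 * vs →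
      m / 2 * (v - w) ^ 2 ≤
        v ^ (1 - γ) / (γ - 1) - w ^ (1 - γ) / (γ - 1) + w ^ (-γ) * (v - w) := by
    intro v hv hv3
    have hsq : HasDerivAt (fun t : ℝ => m / 2 * t ^ 2) (m * w) w := by
      have h := (hasDerivAt_pow 2 w).const_mul (m / 2)
      refine h.congr_deriv ?_
      push_cast; ring
    have hd : HasDerivAt
        (fun x : ℝ => x ^ (1 - γ) / (γ - 1) - γ * (3 * vs) ^ (-γ - 1) / 2 * x ^ 2)
        (-(w ^ (-γ)) - m * w) w := by
      have := (hasDerivAt_Qfun (x := w) hγ hw).sub hsq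
      exact this
    have ht := tangent_line_le (convexOn_QA hγ h3vs) hwmem ⟨hv, hv3⟩ hd
    rw [hm] at ht ⊢
    nlinarith [ht]
  constructor
  · intro v hv hv3
    have h := keyA v hv hv3
    have hineq : ε ≤ m / 2 := min_le_left _ _
    rw [inv_inv, sq_abs]
    nlinarith [sq_nonneg (v - w)]
  · intro v hv3
    have hu : (3 * vs : ℝ) ∈ Ioi (0:ℝ) := h3vs
    have hvmem : v ∈ Ioi (0:ℝ) := by simp; linarith
    have ht := tangent_line_le (convexOn_QB hγ) hu hvmem
      (hasDerivAt_Qfun (x := 3 * vs) hγ h3vs)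
    have hA := keyA (3 * vs) h3vs le_rfl
    have hT3 : (2 * vs) ^ (-γ) ≤ w ^ (-γ) :=
      Real.rpow_le_rpow_of_nonpos hw hw2.le (by linarith)
    have h7 : 0 ≤ v - 3 * vs := by linarith
    have hεc2 : ε ≤ c₂ := le_trans (min_le_right _ _) (min_le_left _ _)
    have hεm6 : ε ≤ m * vs / 6 := le_trans (min_le_right _ _) (min_le_right _ _)
    have hprod : 0 ≤ (v - 3 * vs) * (w ^ (-γ) - (3 * vs) ^ (-γ) - ε) := by
      apply mul_nonneg h7
      have : ε ≤ w ^ (-γ) - (3 * vs) ^ (-γ) := by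
        rw [hc₂] at hεc2; linarith
      linarith
    have habs : |v - w| = v - w := abs_of_nonneg (by linarith)
    rw [inv_inv, habs]
    have hsq2 : vs ^ 2 ≤ (3 * vs - w) ^ 2 := by nlinarith
    nlinarith [ht, hA, hprod, hsq2, mul_le_mul_of_nonneg_right hεm6 (by linarith : (0:ℝ) ≤ 3 * vs)]
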